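/- Let a > 0 and R > 0. There exists a constant C > 0, depending only on a and R, such that for all 0 < ε < 1, |∫_{−R}^{R} x⁴/(ε + a x²)³ dx − 3π/(8 a^{5/2} √ε)| ≤ C. -/

import Mathlib

open Real

lemma deriv_F (a ε : ℝ) (ha : 0 < a) (hε : 0 < ε) (x : ℝ) :
    HasDerivAt (fun y => 3 / (8 * a ^ 2 * Real.sqrt (a * ε)) * Real.arctan (y * Real.sqrt (a / ε))
        - 5 / (8 * a ^ 2) * (y / (ε + a * y ^ 2))
        + ε / (4 * a ^ 2) * (y / (ε + a * y ^ 2) ^ 2))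
      (x ^ 4 / (ε + a * x ^ 2) ^ 3) x := by
  have hd : 0 < ε + a * x ^ 2 := by positivity
  have hu : Real.sqrt (a / ε) ^ 2 = a / ε := Real.sq_sqrt (by positivity)
  have ht : 0 < Real.sqrt (a * ε) := Real.sqrt_pos.mpr (by positivity)
  have ht2 : Real.sqrt (a * ε) ^ 2 = a * ε := Real.sq_sqrt (by positivity)
  have hut : Real.sqrt (a / ε) * Real.sqrt (a * ε) = a := by
    rw [← Real.sqrt_mul (by positivity)]
    rw [show a / ε * (a * ε) = a ^ 2 by field_simp]
    exact Real.sqrt_sq ha.le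
  have hueq : Real.sqrt (a / ε) = a / Real.sqrt (a * ε) :=
    eq_div_of_mul_eq ht.ne' hut
  have hden : HasDerivAt (fun y : ℝ => ε + a * y ^ 2) (a * (2 * x)) x := by
    have := ((hasDerivAt_pow 2 x).const_mul a).const_add ε
    simpa using this
  have h1 : HasDerivAt (fun y : ℝ => Real.arctan (y * Real.sqrt (a / ε)))
      (1 / (1 + (x * Real.sqrt (a / ε)) ^ 2) * Real.sqrt (a / ε)) x := by
    have := (Real.hasDerivAt_arctan (x * Real.sqrt (a / ε))).comp x
      ((hasDerivAt_id x).mul_const (Real.sqrt (a / ε)))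
    simpa [Function.comp_def] using this
  have h1s : 1 + (x * Real.sqrt (a / ε)) ^ 2 = (ε + a * x ^ 2) / ε := by
    rw [mul_pow, hu]; field_simp
  have h1' : HasDerivAt (fun y : ℝ => Real.arctan (y * Real.sqrt (a / ε)))
      (Real.sqrt (a * ε) / (ε + a * x ^ 2)) x := by
    convert h1 using 1
    rw [h1s, hueq]
    rw [eq_comm, one_div, inv_div, div_mul_div_comm, div_eq_div_iff (by positivity) hd.ne']
    field_simp
    rw [Real.sq_sqrt (by positivity)]
  have h2 : HasDerivAt (fun y : ℝ => y / (ε + a * y ^ 2))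
      ((1 * (ε + a * x ^ 2) - x * (a * (2 * x))) / (ε + a * x ^ 2) ^ 2) x :=
    (hasDerivAt_id x).div hden hd.ne'
  have hden2 : HasDerivAt (fun y : ℝ => (ε + a * y ^ 2) ^ 2)
      (2 * (ε + a * x ^ 2) ^ 1 * (a * (2 * x))) x := by
    simpa [Pi.pow_def] using hden.pow 2
  have h3 : HasDerivAt (fun y : ℝ => y / (ε + a * y ^ 2) ^ 2)
      ((1 * (ε + a * x ^ 2) ^ 2 - x * (2 * (ε + a * x ^ 2) ^ 1 * (a * (2 * x)))) /
        ((ε + a * x ^ 2) ^ 2) ^ 2) x :=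
    (hasDerivAt_id x).div hden2 (by positivity)
  have H := ((h1'.const_mul (3 / (8 * a ^ 2 * Real.sqrt (a * ε)))).sub
      (h2.const_mul (5 / (8 * a ^ 2)))).add (h3.const_mul (ε / (4 * a ^ 2)))
  refine H.congr_deriv ?_
  rw [show 3 / (8 * a ^ 2 * Real.sqrt (a * ε)) * (Real.sqrt (a * ε) / (ε + a * x ^ 2))
      = 3 / (8 * a ^ 2 * (ε + a * x ^ 2)) by
    field_simp]
  field_simp
  ring

lemma my_arctan_le_self {x : ℝ} (hx : 0 ≤ x) : Real.arctan x ≤ x := by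
  rcases eq_or_lt_of_le hx with h | h
  · simp [← h]
  · have h0 : 0 < Real.arctan x := by
      have := Real.arctan_strictMono h
      simpa using this
    have := Real.lt_tan h0 (Real.arctan_lt_pi_div_two x)
    rw [Real.tan_arctan] at this
    exact this.le

theorem stmt_5 (a R : ℝ) (ha : 0 < a) (hR : 0 < R) :
    ∃ C > 0, ∀ ε : ℝ, 0 < ε → ε < 1 →
      |(∫ x in (-R)..R, x ^ 4 / (ε + a * x ^ 2) ^ 3) -
          3 * Real.pi / (8 * a ^ ((5 : ℝ) / 2) * Real.sqrt ε)| ≤ C := by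
  refine ⟨3/(4*a^3*R) + 5/(4*a^3*R) + 1/(2*a^4*R^3), by positivity, ?_⟩
  intro ε hε hε1
  set u := Real.sqrt (a / ε) with hudef
  set t := Real.sqrt (a * ε) with htdef
  have hu0 : 0 < u := Real.sqrt_pos.mpr (by positivity)
  have ht0 : 0 < t := Real.sqrt_pos.mpr (by positivity)
  have hut : u * t = a := by
    rw [hudef, htdef, ← Real.sqrt_mul (by positivity)]
    rw [show a / ε * (a * ε) = a ^ 2 by field_simp]
    exact Real.sqrt_sq ha.le
  have hd : 0 < ε + a * R ^ 2 := by positivity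
  have hcont : Continuous fun x : ℝ => x ^ 4 / (ε + a * x ^ 2) ^ 3 := by
    refine Continuous.div (by continuity) (by continuity) fun x => ?_
    positivity
  have hFTC := intervalIntegral.integral_eq_sub_of_hasDerivAt
    (f := fun y => 3 / (8 * a ^ 2 * t) * Real.arctan (y * u)
        - 5 / (8 * a ^ 2) * (y / (ε + a * y ^ 2))
        + ε / (4 * a ^ 2) * (y / (ε + a * y ^ 2) ^ 2))
    (fun x _ => deriv_F a ε ha hε x) (hcont.intervalIntegrable (-R) R)
  rw [hFTC]
  have h52 : (8 : ℝ) * a ^ ((5 : ℝ) / 2) * Real.sqrt ε = 8 * a ^ 2 * t := by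
    rw [show (5:ℝ)/2 = (2:ℕ) + (1/2 : ℝ) by norm_num, Real.rpow_add ha,
      Real.rpow_natCast, ← Real.sqrt_eq_rpow, htdef, Real.sqrt_mul ha.le]
    ring
  have hAneg : Real.arctan (-R * u) = -Real.arctan (R * u) := by
    rw [show -R * u = -(R * u) by ring, Real.arctan_neg]
  have hkey : (fun y => 3 / (8 * a ^ 2 * t) * Real.arctan (y * u)
        - 5 / (8 * a ^ 2) * (y / (ε + a * y ^ 2))
        + ε / (4 * a ^ 2) * (y / (ε + a * y ^ 2) ^ 2)) R
      - (fun y => 3 / (8 * a ^ 2 * t) * Real.arctan (y * u)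
        - 5 / (8 * a ^ 2) * (y / (ε + a * y ^ 2))
        + ε / (4 * a ^ 2) * (y / (ε + a * y ^ 2) ^ 2)) (-R)
      - 3 * Real.pi / (8 * a ^ ((5 : ℝ) / 2) * Real.sqrt ε)
      = 3 / (4 * a ^ 2 * t) * (Real.arctan (R * u) - Real.pi / 2)
        + (- (5 / (4 * a ^ 2)) * (R / (ε + a * R ^ 2))
        + ε / (2 * a ^ 2) * (R / (ε + a * R ^ 2) ^ 2)) := by
    simp only
    rw [h52, hAneg]
    ring
  rw [hkey]
  -- bound the three pieces
  have hA : Real.arctan (R * u) ≤ Real.pi / 2 := (Real.arctan_lt_pi_div_two _).le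
  have hgap : Real.pi / 2 - Real.arctan (R * u) ≤ 1 / (R * u) := by
    have h1 : Real.arctan ((R * u)⁻¹) = Real.pi / 2 - Real.arctan (R * u) :=
      Real.arctan_inv_of_pos (by positivity)
    rw [← h1, one_div]
    exact my_arctan_le_self (by positivity)
  have hb1 : |3 / (4 * a ^ 2 * t) * (Real.arctan (R * u) - Real.pi / 2)| ≤ 3 / (4 * a ^ 3 * R) := by
    rw [abs_mul, abs_of_nonneg (by positivity), abs_of_nonpos (by linarith), neg_sub]
    have step : 3 / (4 * a ^ 2 * t) * (Real.pi / 2 - Real.arctan (R * u))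
        ≤ 3 / (4 * a ^ 2 * t) * (1 / (R * u)) :=
      mul_le_mul_of_nonneg_left hgap (by positivity)
    refine step.trans_eq ?_
    rw [div_mul_div_comm, mul_one]
    congr 1
    linear_combination 4 * a ^ 2 * R * hut
  have hb2 : |(- (5 / (4 * a ^ 2)) * (R / (ε + a * R ^ 2))
        + ε / (2 * a ^ 2) * (R / (ε + a * R ^ 2) ^ 2))|
      ≤ 5 / (4 * a ^ 3 * R) + 1 / (2 * a ^ 4 * R ^ 3) := by
    refine (abs_add_le _ _).trans (add_le_add ?_ ?_)
    · rw [abs_mul, abs_neg, abs_of_nonneg (by positivity), abs_of_nonneg (by positivity)]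
      have h1 : R / (ε + a * R ^ 2) ≤ R / (a * R ^ 2) :=
        div_le_div_of_nonneg_left hR.le (by positivity) (by linarith)
      calc 5 / (4 * a ^ 2) * (R / (ε + a * R ^ 2)) ≤ 5 / (4 * a ^ 2) * (R / (a * R ^ 2)) :=
            mul_le_mul_of_nonneg_left h1 (by positivity)
        _ = 5 / (4 * a ^ 3 * R) := by field_simp
    · rw [abs_mul, abs_of_nonneg (by positivity), abs_of_nonneg (by positivity)]
      have h1 : R / (ε + a * R ^ 2) ^ 2 ≤ R / (a * R ^ 2) ^ 2 :=
        div_le_div_of_nonneg_left hR.le (by positivity)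
          (pow_le_pow_left₀ (by positivity) (by linarith) 2)
      have h2 : ε / (2 * a ^ 2) ≤ 1 / (2 * a ^ 2) :=
        (div_le_div_iff_of_pos_right (by positivity)).mpr hε1.le
      calc ε / (2 * a ^ 2) * (R / (ε + a * R ^ 2) ^ 2)
            ≤ 1 / (2 * a ^ 2) * (R / (a * R ^ 2) ^ 2) := by
            apply mul_le_mul h2 h1 (by positivity) (by positivity)
        _ = 1 / (2 * a ^ 4 * R ^ 3) := by field_simp
  calc |3 / (4 * a ^ 2 * t) * (Real.arctan (R * u) - Real.pi / 2)
        + (- (5 / (4 * a ^ 2)) * (R / (ε + a * R ^ 2))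
        + ε / (2 * a ^ 2) * (R / (ε + a * R ^ 2) ^ 2))|
      ≤ |3 / (4 * a ^ 2 * t) * (Real.arctan (R * u) - Real.pi / 2)|
        + |(- (5 / (4 * a ^ 2)) * (R / (ε + a * R ^ 2))
        + ε / (2 * a ^ 2) * (R / (ε + a * R ^ 2) ^ 2))| := abs_add_le _ _
    _ ≤ 3 / (4 * a ^ 3 * R) + (5 / (4 * a ^ 3 * R) + 1 / (2 * a ^ 4 * R ^ 3)) :=
        add_le_add hb1 hb2
    _ = 3 / (4 * a ^ 3 * R) + 5 / (4 * a ^ 3 * R) + 1 / (2 * a ^ 4 * R ^ 3) := by ring
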